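/- Let H be a Hilbert space, K ⊆ H, F : K → H monotone, and suppose for each ε in a sequence εⱼ → 0 there exists x_ε ∈ K with ⟨F(x_ε) + εL x_ε, w − x_ε⟩ ≥ 0 for all w ∈ K, where L is bounded self-adjoint positive semidefinite with sup_ε ‖√ε x_ε‖ ≤ C. If x_ε ⇀ x weakly in H with x ∈ closure of K and ⟨F(w), w − x_ε⟩ → ⟨F(w), w − x⟩ for each w ∈ K, then ⟨F(w), w − x⟩ ≥ 0 for all w ∈ K. -/

import Mathlib

open RealInnerProductSpace

/-- Minty's method in the limit `ε → 0`: the weak limit of solutions of the regularized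
variational inequalities solves the limiting variational inequality. -/
theorem stmt_19 {X : Type*} [NormedAddCommGroup X] [InnerProductSpace ℝ X] [CompleteSpace X]
    (K : Set X) (F : X → X)
    (hmono : ∀ a ∈ K, ∀ b ∈ K, 0 ≤ ⟪F a - F b, a - b⟫)
    (L : X →L[ℝ] X) (hLsa : IsSelfAdjoint L) (hLpsd : ∀ y, 0 ≤ ⟪L y, y⟫)
    (ε : ℕ → ℝ) (hεpos : ∀ j, 0 < ε j) (hε0 : Filter.Tendsto ε Filter.atTop (nhds 0))
    (xseq : ℕ → X) (hxK : ∀ j, xseq j ∈ K)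
    (hVI : ∀ j, ∀ w ∈ K, 0 ≤ ⟪F (xseq j) + ε j • L (xseq j), w - xseq j⟫)
    (C : ℝ) (hbound : ∀ j, Real.sqrt (ε j) * ‖xseq j‖ ≤ C)
    (x : X) (hx : x ∈ closure K)
    (hconv : ∀ w ∈ K, Filter.Tendsto (fun j => ⟪F w, w - xseq j⟫) Filter.atTop
      (nhds ⟪F w, w - x⟫)) :
    ∀ w ∈ K, 0 ≤ ⟪F w, w - x⟫ := by
  intro w hw
  have key : ∀ j, -(Real.sqrt (ε j) * (C * (‖L‖ * ‖w‖))) ≤ ⟪F w, w - xseq j⟫ := by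
    intro j
    have h1 : ⟪F (xseq j), w - xseq j⟫ ≤ ⟪F w, w - xseq j⟫ := by
      have := hmono w hw (xseq j) (hxK j)
      have hsplit : ⟪F w - F (xseq j), w - xseq j⟫ =
          ⟪F w, w - xseq j⟫ - ⟪F (xseq j), w - xseq j⟫ := by
        rw [inner_sub_left]
      linarith [this, hsplit ▸ this]
    have h2 : -(ε j * ⟪L (xseq j), w - xseq j⟫) ≤ ⟪F (xseq j), w - xseq j⟫ := by
      have := hVI j w hw
      rw [inner_add_left, real_inner_smul_left] at this
      linarith
    have h3 : ε j * ⟪L (xseq j), w - xseq j⟫ ≤ Real.sqrt (ε j) * (C * (‖L‖ * ‖w‖)) := by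
      have hεnn : 0 ≤ ε j := (hεpos j).le
      have hsq : Real.sqrt (ε j) * Real.sqrt (ε j) = ε j := Real.mul_self_sqrt hεnn
      have hpsd : 0 ≤ ε j * ⟪L (xseq j), xseq j⟫ :=
        mul_nonneg hεnn (hLpsd _)
      have hcs : ⟪L (xseq j), w⟫ ≤ ‖L (xseq j)‖ * ‖w‖ := real_inner_le_norm _ _
      have hLb : ‖L (xseq j)‖ ≤ ‖L‖ * ‖xseq j‖ := L.le_opNorm _
      have hsplit : ⟪L (xseq j), w - xseq j⟫ =
          ⟪L (xseq j), w⟫ - ⟪L (xseq j), xseq j⟫ := inner_sub_right _ _ _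
      have step1 : ε j * ⟪L (xseq j), w - xseq j⟫ ≤ ε j * ⟪L (xseq j), w⟫ := by
        rw [hsplit]; nlinarith
      have step2 : ε j * ⟪L (xseq j), w⟫ ≤ ε j * (‖L‖ * ‖xseq j‖ * ‖w‖) := by
        apply mul_le_mul_of_nonneg_left _ hεnn
        calc ⟪L (xseq j), w⟫ ≤ ‖L (xseq j)‖ * ‖w‖ := hcs
          _ ≤ ‖L‖ * ‖xseq j‖ * ‖w‖ :=
            mul_le_mul_of_nonneg_right hLb (norm_nonneg _)
        
      have step3 : ε j * (‖L‖ * ‖xseq j‖ * ‖w‖) ≤ Real.sqrt (ε j) * (C * (‖L‖ * ‖w‖)) := by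
        have hb := hbound j
        have hsqnn : 0 ≤ Real.sqrt (ε j) := Real.sqrt_nonneg _
        have hLnn : 0 ≤ ‖L‖ := norm_nonneg _
        have hwnn : 0 ≤ ‖w‖ := norm_nonneg _
        have h4 := mul_le_mul_of_nonneg_right
          (mul_le_mul_of_nonneg_left hb hsqnn) (mul_nonneg hLnn hwnn)
        calc ε j * (‖L‖ * ‖xseq j‖ * ‖w‖)
            = Real.sqrt (ε j) * (Real.sqrt (ε j) * ‖xseq j‖) * (‖L‖ * ‖w‖) := by
              linear_combination (‖L‖ * ‖xseq j‖ * ‖w‖) * hsq.symm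
          _ ≤ Real.sqrt (ε j) * C * (‖L‖ * ‖w‖) := h4
          _ = Real.sqrt (ε j) * (C * (‖L‖ * ‖w‖)) := by ring
      linarith
    linarith
  have hlim0 : Filter.Tendsto (fun j => -(Real.sqrt (ε j) * (C * (‖L‖ * ‖w‖))))
      Filter.atTop (nhds 0) := by
    have hsqrt : Filter.Tendsto (fun j => Real.sqrt (ε j)) Filter.atTop (nhds 0) := by
      have := (Real.continuous_sqrt.tendsto 0).comp hε0
      simpa [Real.sqrt_zero, Function.comp_def] using this
    have := (hsqrt.mul_const (C * (‖L‖ * ‖w‖))).neg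
    simpa using this
  exact le_of_tendsto_of_tendsto' hlim0 (hconv w hw) key
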